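/- Let C be a Griesmer [g_q(k,d),k,d] code over F_q with k ≥ 2, identified with a multiset M of points in PG(k−1,q), and let P be a point achieving the maximum multiplicity γ(M). Then the shortened subcode C_P, consisting of all codewords vanishing on all coordinates whose column equals P, is a Griesmer [g_q(k−1,d), k−1, d] code. -/

import Mathlib

/-- Hamming weight of a vector. -/
noncomputable def wt {ι F : Type*} [Zero F] (c : ι → F) : ℕ :=
  Nat.card {i // c i ≠ 0}

/-- Griesmer sum `g_q(k,d) = ∑_{i<k} ⌈d / q^i⌉` (using `(d + q^i - 1)/q^i`). -/
def gbound (q k d : ℕ) : ℕ :=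
  ∑ i ∈ Finset.range k, (d + q ^ i - 1) / q ^ i

open Finset

def cdiv (a b : ℕ) : ℕ := (a + b - 1) / b

lemma cdiv_le_iff {b : ℕ} (hb : 0 < b) (a c : ℕ) : cdiv a b ≤ c ↔ a ≤ c * b := by
  rw [cdiv, Nat.div_le_iff_le_mul_add_pred hb, Nat.mul_comm b c]
  set x := c * b; omega

lemma cdiv_mono {b : ℕ} (hb : 0 < b) {a a' : ℕ} (h : a ≤ a') : cdiv a b ≤ cdiv a' b := by
  apply Nat.div_le_div_right; omega

lemma cdiv_one (a : ℕ) : cdiv a 1 = a := by simp [cdiv]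

lemma cdiv_cdiv {b c : ℕ} (hb : 0 < b) (hc : 0 < c) (a : ℕ) :
    cdiv (cdiv a b) c = cdiv a (b * c) := by
  have hbc : 0 < b * c := Nat.mul_pos hb hc
  have key : ∀ e, cdiv (cdiv a b) c ≤ e ↔ cdiv a (b*c) ≤ e := by
    intro e
    rw [cdiv_le_iff hc, cdiv_le_iff hb, cdiv_le_iff hbc, mul_assoc, mul_comm c b]
  exact le_antisymm ((key _).2 le_rfl) ((key _).1 le_rfl)

lemma cdiv_mul_add_one {b : ℕ} (hb : 0 < b) (A : ℕ) : cdiv (A * b + 1) b = A + 1 := by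
  have : A * b + 1 + b - 1 = A * b + b := by omega
  rw [cdiv, this]
  have : A * b + b = (A+1) * b := by ring
  rw [this, Nat.mul_div_cancel _ hb]

lemma le_cdiv {b : ℕ} (hb : 0 < b) {a c : ℕ} (h : c * b + 1 ≤ a) : c ≤ cdiv a b := by
  by_contra hc
  push_neg at hc
  obtain ⟨c', rfl⟩ : ∃ c', c = c' + 1 := ⟨c - 1, by omega⟩
  have h2 := (cdiv_le_iff hb a (cdiv a b)).1 le_rfl
  have h3 : cdiv a b * b ≤ c' * b := Nat.mul_le_mul_right _ (by omega)
  rw [add_one_mul] at h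
  omega

lemma one_le_cdiv {b : ℕ} (hb : 0 < b) {a : ℕ} (ha : 0 < a) : 1 ≤ cdiv a b := by
  by_contra h
  push_neg at h
  have := (cdiv_le_iff hb a 0).1 (by omega)
  omega

open Finset

section wtlemmas
variable {ι F : Type*} [Fintype ι] [Zero F]

lemma natcard_filter (p : ι → Prop) [DecidablePred p] :
    Nat.card {i // p i} = (univ.filter p).card := by
  rw [Nat.card_eq_fintype_card, Fintype.card_subtype]

lemma wt_eq (c : ι → F) [DecidablePred (fun i => c i ≠ 0)] :
    wt c = (univ.filter (fun i => c i ≠ 0)).card := by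
  classical
  rw [wt, natcard_filter]

lemma wt_eq_zero_iff (c : ι → F) : wt c = 0 ↔ c = 0 := by
  classical
  rw [wt_eq, Finset.card_eq_zero, Finset.filter_eq_empty_iff]
  constructor
  · intro h; funext i; have := h (mem_univ i); simpa using this
  · intro h i _; simp [h]

end wtlemmas

lemma gbound_eq (q k d : ℕ) : gbound q k d = ∑ i ∈ Finset.range k, cdiv d (q ^ i) := rfl

lemma gbound_mono {q : ℕ} (hq : 0 < q) (k : ℕ) {d d' : ℕ} (h : d ≤ d') :
    gbound q k d ≤ gbound q k d' := by
  rw [gbound_eq, gbound_eq]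
  exact Finset.sum_le_sum fun i _ => cdiv_mono (pow_pos hq i) h

lemma gbound_strict {q : ℕ} (hq : 0 < q) {k d d' : ℕ} (hk : 0 < k) (h : d < d') :
    gbound q k d < gbound q k d' := by
  rw [gbound_eq, gbound_eq]
  apply Finset.sum_lt_sum
  · exact fun i _ => cdiv_mono (pow_pos hq i) h.le
  · exact ⟨0, Finset.mem_range.2 hk, by simpa [pow_zero, cdiv_one] using h⟩

lemma gbound_succ {q : ℕ} (hq : 0 < q) (k d : ℕ) :
    gbound q (k + 1) d = d + gbound q k (cdiv d q) := by
  rw [gbound_eq, Finset.sum_range_succ', gbound_eq]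
  simp only [pow_zero, cdiv_one]
  rw [add_comm]
  congr 1
  apply Finset.sum_congr rfl
  intro i _
  rw [cdiv_cdiv hq (pow_pos hq i), ← pow_succ']

section griesmer
variable {F : Type*} [Field F] [Fintype F]

lemma sum_ite_const {ι : Type*} [Fintype ι] (p : ι → Prop) [DecidablePred p] (x : ℕ) :
    (∑ j : ι, if p j then x else 0) = (univ.filter p).card * x := by
  rw [Finset.sum_ite, Finset.sum_const, Finset.sum_const, smul_eq_mul, smul_zero, add_zero]

lemma residual_wt {ι : Type*} [Fintype ι]
    (D : Submodule F (ι → F)) (w : ℕ)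
    (hwmin : ∀ c ∈ D, c ≠ 0 → w ≤ wt c)
    {c₀ : ι → F} (hc₀D : c₀ ∈ D) (hc₀w : wt c₀ = w)
    {b : ι → F} (hbD : b ∈ D) (hb : b ∉ Submodule.span F {c₀}) :
    cdiv w (Fintype.card F) ≤ Nat.card {j : ι // c₀ j = 0 ∧ b j ≠ 0} := by
  classical
  set q := Fintype.card F with hqdef
  have hq : 0 < q := Fintype.card_pos
  rw [natcard_filter]
  set B := univ.filter (fun j => c₀ j = 0 ∧ b j ≠ 0) with hB
  have hlow : ∀ α : F, w ≤ wt (b - α • c₀) := by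
    intro α
    apply hwmin _ (Submodule.sub_mem D hbD (Submodule.smul_mem D α hc₀D))
    intro h
    exact hb (Submodule.mem_span_singleton.2 ⟨α, (sub_eq_zero.1 h).symm⟩)
  have hsum : q * w ≤ ∑ α : F, wt (b - α • c₀) := by
    calc q * w = (univ : Finset F).card * w := by rw [Finset.card_univ]
    _ ≤ ∑ α : F, wt (b - α • c₀) := by
        rw [← smul_eq_mul]
        exact Finset.card_nsmul_le_sum _ _ _ (fun α _ => hlow α)
  have hcompute : ∑ α : F, wt (b - α • c₀)
      = (univ.filter (fun j => c₀ j ≠ 0)).card * (q - 1) + B.card * q := by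
    have h1 : ∀ α : F, wt (b - α • c₀)
        = ∑ j : ι, if b j - α * c₀ j ≠ 0 then 1 else 0 := by
      intro α
      rw [wt_eq, Finset.card_filter]
      exact Finset.sum_congr rfl fun j _ => by simp [Pi.sub_apply, Pi.smul_apply, smul_eq_mul]
    simp only [h1]
    rw [Finset.sum_comm]
    have h2 : ∀ j : ι, (∑ α : F, if b j - α * c₀ j ≠ 0 then 1 else 0)
        = (if c₀ j ≠ 0 then q - 1 else 0) + (if c₀ j = 0 ∧ b j ≠ 0 then q else 0) := by
      intro j
      rw [← Finset.card_filter]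
      by_cases hc : c₀ j = 0
      · by_cases hbj : b j = 0
        · simp [hc, hbj]
        · have heq : (univ.filter fun α : F => b j - α * c₀ j ≠ 0) = univ :=
            Finset.filter_true_of_mem (fun α _ => by simp [hc, hbj])
          rw [heq]
          simp [hc, hbj, Finset.card_univ, hqdef]
      · have heq : (univ.filter fun α : F => b j - α * c₀ j ≠ 0)
            = univ.erase (b j * (c₀ j)⁻¹) := by
          rw [← Finset.filter_ne']
          apply Finset.filter_congr
          intro α _
          constructor
          · intro h hx
            apply h
            rw [hx]
            field_simp
            simp
          · intro h hx
            apply h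
            rw [sub_eq_zero] at hx
            rw [hx]
            field_simp
        rw [heq, Finset.card_erase_of_mem (Finset.mem_univ _), Finset.card_univ]
        simp [hc, hqdef]
    simp only [h2]
    rw [Finset.sum_add_distrib, sum_ite_const, sum_ite_const]
  have hcount : (univ.filter (fun j => c₀ j ≠ 0)).card = w := by
    rw [← wt_eq]; exact hc₀w
  rw [hcount] at hcompute
  rw [cdiv_le_iff hq]
  rw [hcompute] at hsum
  rcases Nat.exists_eq_add_of_le hq with ⟨r, hr⟩
  rw [hr] at hsum ⊢
  simp only [Nat.add_sub_cancel_left] at hsum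
  nlinarith [hsum]
end griesmer

section griesmer2
variable {F : Type*} [Field F] [Fintype F]

theorem griesmer (κ : ℕ) :
    ∀ (ι : Type) [Fintype ι] (δ : ℕ) (D : Submodule F (ι → F)),
      Module.finrank F D = κ → (∀ c ∈ D, c ≠ 0 → δ ≤ wt c) →
      gbound (Fintype.card F) κ δ ≤ Fintype.card ι := by
  induction κ with
  | zero => intro ι _ δ D _ _; simp [gbound]
  | succ κ ih =>
    intro ι _ δ D hrank hmin
    classical
    have hq : 0 < Fintype.card F := Fintype.card_pos
    have hD0 : D ≠ ⊥ := by
      intro h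
      rw [h] at hrank
      simp at hrank
    obtain ⟨c₁, hc₁D, hc₁⟩ := Submodule.exists_mem_ne_zero_of_ne_bot hD0
    set Wset : Set ℕ := {x | ∃ c ∈ D, c ≠ 0 ∧ wt c = x} with hWdef
    have hWne : Wset.Nonempty := ⟨wt c₁, c₁, hc₁D, hc₁, rfl⟩
    obtain ⟨c₀, hc₀D, hc₀ne, hc₀w⟩ := Nat.sInf_mem hWne
    set w := sInf Wset with hwdef
    have hwmin : ∀ c ∈ D, c ≠ 0 → w ≤ wt c := fun c hc hne => Nat.sInf_le ⟨c, hc, hne, rfl⟩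
    have hδw : δ ≤ w := hc₀w ▸ hmin c₀ hc₀D hc₀ne
    have hw1 : 1 ≤ w := by
      rcases Nat.eq_zero_or_pos w with h | h
      · exact absurd ((wt_eq_zero_iff c₀).1 (by rw [hc₀w, h])) hc₀ne
      · exact h
    set ι' := {j : ι // c₀ j = 0} with hι'
    set π : (ι → F) →ₗ[F] (ι' → F) := LinearMap.funLeft F F Subtype.val with hπ
    have hπc₀ : π c₀ = 0 := funext fun j => j.prop
    have hres : ∀ b ∈ D, b ∉ Submodule.span F {c₀} →
        cdiv w (Fintype.card F) ≤ wt (π b) := by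
      intro b hbD hb
      have h1 := residual_wt D w hwmin hc₀D hc₀w hbD hb
      have h2 : wt (π b) = Nat.card {j : ι // c₀ j = 0 ∧ b j ≠ 0} := by
        rw [wt]
        apply Nat.card_congr
        exact ⟨fun x => ⟨x.1.1, x.1.2, x.2⟩, fun y => ⟨⟨y.1, y.2.1⟩, y.2.2⟩,
          fun _ => rfl, fun _ => rfl⟩
      omega
    have hker : LinearMap.ker (π ∘ₗ D.subtype) = Submodule.span F {(⟨c₀, hc₀D⟩ : D)} := by
      apply le_antisymm
      · intro x hx
        rw [LinearMap.mem_ker, LinearMap.comp_apply, Submodule.subtype_apply] at hx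
        by_cases hxs : (x : ι → F) ∈ Submodule.span F {c₀}
        · rcases Submodule.mem_span_singleton.1 hxs with ⟨α, hα⟩
          exact Submodule.mem_span_singleton.2 ⟨α, Subtype.ext hα⟩
        · exfalso
          have h1 := hres x.val x.prop hxs
          have h2 : wt (π x.val) = 0 := by rw [hx]; exact (wt_eq_zero_iff _).2 rfl
          have h3 := one_le_cdiv hq hw1
          omega
      · rw [Submodule.span_le, Set.singleton_subset_iff]
        rw [SetLike.mem_coe, LinearMap.mem_ker, LinearMap.comp_apply, Submodule.subtype_apply]
        exact hπc₀
    have hkerrank : Module.finrank F (LinearMap.ker (π ∘ₗ D.subtype)) = 1 := by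
      rw [hker]
      apply finrank_span_singleton
      intro h
      exact hc₀ne (congrArg Subtype.val h)
    set D' := D.map π with hD'
    have hrange : LinearMap.range (π ∘ₗ D.subtype) = D' := by
      rw [LinearMap.range_comp, Submodule.range_subtype]
    have hrank' : Module.finrank F D' = κ := by
      have h := LinearMap.finrank_range_add_finrank_ker (π ∘ₗ D.subtype)
      rw [hrange, hkerrank, hrank] at h
      omega
    have hmin' : ∀ c' ∈ D', c' ≠ 0 → cdiv w (Fintype.card F) ≤ wt c' := by
      rintro c' hc' hne
      rcases Submodule.mem_map.1 hc' with ⟨b, hbD, rfl⟩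
      apply hres b hbD
      intro hbs
      rcases Submodule.mem_span_singleton.1 hbs with ⟨α, hα⟩
      apply hne
      rw [← hα, map_smul, hπc₀, smul_zero]
    have hih := ih ι' (cdiv w (Fintype.card F)) D' hrank' hmin'
    have hcards : Fintype.card ι' + w = Fintype.card ι := by
      have h1 : Fintype.card ι' = (univ.filter (fun j => c₀ j = 0)).card :=
        Fintype.card_subtype _
      rw [h1, ← hc₀w, wt_eq, ← Finset.card_univ (α := ι)]
      exact Finset.card_filter_add_card_filter_not (fun j => c₀ j = 0)
    calc gbound (Fintype.card F) (κ+1) δ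
        ≤ gbound (Fintype.card F) (κ+1) w := gbound_mono hq _ hδw
      _ = w + gbound (Fintype.card F) κ (cdiv w (Fintype.card F)) := gbound_succ hq κ w
      _ ≤ w + Fintype.card ι' := by omega
      _ = Fintype.card ι := by omega

end griesmer2

section griesmer3
variable {F : Type*} [Field F] [Fintype F]

theorem griesmer_support {ι : Type} [Fintype ι]
    (κ δ : ℕ) (D : Submodule F (ι → F)) (hrank : Module.finrank F D = κ)
    (hmin : ∀ c ∈ D, c ≠ 0 → δ ≤ wt c) :
    gbound (Fintype.card F) κ δ ≤ Nat.card {j : ι // ∃ c ∈ D, c j ≠ 0} := by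
  classical
  set ι'' := {j : ι // ∃ c ∈ D, c j ≠ 0} with hι''
  set π : (ι → F) →ₗ[F] (ι'' → F) := LinearMap.funLeft F F Subtype.val with hπ
  set D'' := D.map π with hD''
  have hbzero : ∀ b ∈ D, π b = 0 → b = 0 := by
    intro b hb h0
    funext j
    by_cases hj : ∃ c ∈ D, c j ≠ 0
    · exact congrFun h0 ⟨j, hj⟩
    · by_contra hbj
      exact hj ⟨b, hb, hbj⟩
  have hker : LinearMap.ker (π ∘ₗ D.subtype) = ⊥ := by
    rw [eq_bot_iff]
    intro x hx
    rw [LinearMap.mem_ker, LinearMap.comp_apply, Submodule.subtype_apply] at hx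
    rw [Submodule.mem_bot]
    exact Subtype.ext (hbzero x.val x.prop hx)
  have hrank'' : Module.finrank F D'' = κ := by
    have h := LinearMap.finrank_range_add_finrank_ker (π ∘ₗ D.subtype)
    rw [LinearMap.range_comp, Submodule.range_subtype, hker, hrank] at h
    simpa using h
  have hwt : ∀ b ∈ D, wt b ≤ wt (π b) := by
    intro b hb
    rw [wt, wt]
    apply Nat.card_le_card_of_injective
      (fun x : {j : ι // b j ≠ 0} => (⟨⟨x.1, b, hb, x.2⟩, x.2⟩ : {j : ι'' // π b j ≠ 0}))
    intro x y hxy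
    exact Subtype.ext (congrArg (fun z : {j : ι'' // π b j ≠ 0} => z.1.1) hxy)
  have hmin'' : ∀ c'' ∈ D'', c'' ≠ 0 → δ ≤ wt c'' := by
    rintro c'' hc'' hne
    rcases Submodule.mem_map.1 hc'' with ⟨b, hb, rfl⟩
    have hbne : b ≠ 0 := by rintro rfl; exact hne (map_zero π)
    exact le_trans (hmin b hb hbne) (hwt b hb)
  have h := griesmer κ ι'' δ D'' hrank'' hmin''
  rwa [Nat.card_eq_fintype_card]

end griesmer3

section counting
variable {F : Type*} [Field F] [Fintype F]

lemma geom_nat (r k : ℕ) : r * (∑ i ∈ Finset.range k, (1 + r) ^ i) + 1 = (1 + r) ^ k := by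
  induction k with
  | zero => simp
  | succ k ih =>
    rw [Finset.sum_range_succ, Nat.mul_add]
    have h : (1 + r) ^ (k+1) = (1 + r)^k + r * (1+r)^k := by ring
    rw [h, ← ih]
    ring

lemma vecMul_apply' {m n : Type*} [Fintype m] {α : Type*} [NonUnitalNonAssocSemiring α]
    (v : m → α) (M : Matrix m n α) (j : n) :
    Matrix.vecMul v M j = dotProduct v (fun i => M i j) := rfl

lemma mult_lower {n k d : ℕ} (hk2 : 2 ≤ k) (hd : 1 ≤ d)
    (G : Matrix (Fin k) (Fin n) F) (hcol : ∀ j, (fun i => G i j) ≠ 0)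
    (hn : n = gbound (Fintype.card F) k d)
    (g : Fin k → F)
    (hmax : ∀ v : Fin k → F, v ≠ 0 →
      Nat.card {j : Fin n // ∃ lam : F, lam ≠ 0 ∧ (fun i => G i j) = lam • v} ≤
        Nat.card {j : Fin n // ∃ lam : F, lam ≠ 0 ∧ (fun i => G i j) = lam • g}) :
    cdiv d (Fintype.card F ^ (k-1)) ≤
      Nat.card {j : Fin n // ∃ lam : F, lam ≠ 0 ∧ (fun i => G i j) = lam • g} := by
  classical
  set q := Fintype.card F with hqdef
  have hq2 : 1 < q := Fintype.one_lt_card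
  have hq : 0 < q := by omega
  set m := Nat.card {j : Fin n // ∃ lam : F, lam ≠ 0 ∧ (fun i => G i j) = lam • g} with hm
  set T : Finset (Fin k → F) := univ.filter (fun v => v ≠ 0) with hT
  have hTcard : T.card = q ^ k - 1 := by
    rw [hT, Finset.filter_ne', Finset.card_erase_of_mem (Finset.mem_univ _),
      Finset.card_univ, Fintype.card_fun, Fintype.card_fin]
  have claim1 : ∑ v ∈ T, (univ.filter fun j : Fin n =>
      ∃ lam : F, lam ≠ 0 ∧ (fun i => G i j) = lam • v).card = n * (q - 1) := by
    simp only [Finset.card_filter]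
    rw [Finset.sum_comm]
    have hinner : ∀ j : Fin n, (∑ v ∈ T, if (∃ lam : F, lam ≠ 0 ∧ (fun i => G i j) = lam • v)
        then 1 else 0) = q - 1 := by
      intro j
      rw [← Finset.card_filter]
      have himg : T.filter (fun v => ∃ lam : F, lam ≠ 0 ∧ (fun i => G i j) = lam • v)
          = (univ.filter (fun μ : F => μ ≠ 0)).image (fun μ => μ • (fun i => G i j)) := by
        ext v
        simp only [Finset.mem_filter, Finset.mem_image, Finset.mem_univ, true_and, hT]
        constructor
        · rintro ⟨hv0, lam, hlam, hcolv⟩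
          refine ⟨lam⁻¹, inv_ne_zero hlam, ?_⟩
          rw [hcolv, smul_smul, inv_mul_cancel₀ hlam, one_smul]
        · rintro ⟨μ, hμ, rfl⟩
          refine ⟨?_, μ⁻¹, inv_ne_zero hμ, ?_⟩
          · simp only [ne_eq, smul_eq_zero, not_or]
            exact ⟨hμ, hcol j⟩
          · rw [smul_smul, inv_mul_cancel₀ hμ, one_smul]
      rw [himg, Finset.card_image_of_injective _ ?_, Finset.filter_ne',
        Finset.card_erase_of_mem (Finset.mem_univ _), Finset.card_univ]
      intro μ ν hμν
      by_contra hne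
      have := sub_smul μ ν (fun i => G i j) ▸ (sub_eq_zero.2 hμν)
      have h0 : (μ - ν) • (fun i => G i j) = 0 := by rw [sub_smul, sub_eq_zero]; exact hμν
      rcases smul_eq_zero.1 h0 with h | h
      · exact hne (sub_eq_zero.1 h)
      · exact hcol j h
    rw [Finset.sum_congr rfl (fun j _ => hinner j), Finset.sum_const, Finset.card_univ,
      Fintype.card_fin, smul_eq_mul]
  have claim2 : ∀ v ∈ T, (univ.filter fun j : Fin n =>
      ∃ lam : F, lam ≠ 0 ∧ (fun i => G i j) = lam • v).card ≤ m := by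
    intro v hv
    rw [← natcard_filter]
    exact hmax v (by simpa [hT] using hv)
  have hupp : n * (q - 1) ≤ (q ^ k - 1) * m := by
    rw [← claim1, ← hTcard]
    exact Finset.sum_le_card_nsmul _ _ _ claim2
  by_contra hcon
  push_neg at hcon
  have hdm : m * q ^ (k-1) + 1 ≤ d := by
    by_contra h2
    push_neg at h2
    exact absurd ((cdiv_le_iff (pow_pos hq (k-1)) d m).2 (by omega)) (by omega)
  have hnlow : m * (∑ i ∈ Finset.range k, q ^ i) + k ≤ n := by
    rw [hn, gbound_eq]
    have step : ∀ i ∈ Finset.range k, m * q ^ (k-1-i) + 1 ≤ cdiv d (q ^ i) := by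
      intro i hi
      have hik : i < k := Finset.mem_range.1 hi
      have hpow : q ^ (k-1-i) * q ^ i = q ^ (k-1) := by
        rw [← pow_add]
        congr 1
        omega
      have heq : m * q ^ (k-1-i) + 1 = cdiv (m * q ^ (k-1-i) * q ^ i + 1) (q ^ i) :=
        (cdiv_mul_add_one (pow_pos hq i) _).symm
      rw [heq]
      apply cdiv_mono (pow_pos hq i)
      calc m * q ^ (k-1-i) * q ^ i + 1 = m * q ^ (k-1) + 1 := by rw [mul_assoc, hpow]
        _ ≤ d := hdm
    calc m * (∑ i ∈ Finset.range k, q ^ i) + k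
        = ∑ i ∈ Finset.range k, (m * q ^ (k-1-i) + 1) := by
          rw [Finset.sum_add_distrib, Finset.sum_const, Finset.card_range, smul_eq_mul,
            mul_one, ← Finset.mul_sum]
          congr 2
          exact (Finset.sum_range_reflect (fun i => q ^ i) k).symm
      _ ≤ ∑ i ∈ Finset.range k, cdiv d (q ^ i) := Finset.sum_le_sum step
  rcases Nat.exists_eq_add_of_le hq2.le with ⟨r, hr⟩
  have hθ : q ^ k - 1 = (q - 1) * (∑ i ∈ Finset.range k, q ^ i) := by
    have := geom_nat r k
    rw [hr] at *
    simp only [Nat.add_sub_cancel_left] at *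
    omega
  set θ := ∑ i ∈ Finset.range k, q ^ i with hθdef
  rw [hθ] at hupp
  have hq1 : q - 1 = r := by omega
  rw [hq1] at hupp
  nlinarith [hnlow, hupp, hk2]

end counting

section mainthm

def dotL {F : Type*} [Field F] {k : ℕ} (g : Fin k → F) : (Fin k → F) →ₗ[F] F where
  toFun a := dotProduct a g
  map_add' u v := add_dotProduct u v g
  map_smul' r a := by simp [smul_dotProduct]

theorem stmt6 {F : Type*} [Field F] [Fintype F] {n k d : ℕ}
    (hk2 : 2 ≤ k)
    (G : Matrix (Fin k) (Fin n) F)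
    (hinj : Function.Injective fun a : Fin k → F => Matrix.vecMul a G)
    (hcol : ∀ j, (fun i => G i j) ≠ 0)
    (hn : n = gbound (Fintype.card F) k d)
    (hmin : ∀ a : Fin k → F, a ≠ 0 → d ≤ wt (Matrix.vecMul a G))
    (hex : ∃ a : Fin k → F, a ≠ 0 ∧ wt (Matrix.vecMul a G) = d)
    (g : Fin k → F) (hg : g ≠ 0)
    (hmax : ∀ v : Fin k → F, v ≠ 0 →
      Nat.card {j : Fin n // ∃ lam : F, lam ≠ 0 ∧ (fun i => G i j) = lam • v} ≤
        Nat.card {j : Fin n // ∃ lam : F, lam ≠ 0 ∧ (fun i => G i j) = lam • g})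
    (D : Submodule F (Fin n → F))
    (hD : D = LinearMap.range (Matrix.vecMulLinear G) ⊓
        ⨅ j ∈ {j : Fin n | ∃ lam : F, lam ≠ 0 ∧ (fun i => G i j) = lam • g},
          LinearMap.ker (LinearMap.proj j : (Fin n → F) →ₗ[F] F)) :
    Nat.card {j : Fin n // ∃ c ∈ D, c j ≠ 0} = gbound (Fintype.card F) (k - 1) d ∧
    Module.finrank F D = k - 1 ∧
    (∀ c ∈ D, c ≠ 0 → d ≤ wt c) ∧
    (∃ c ∈ D, c ≠ 0 ∧ wt c = d) := by
  classical
  have hq2 : 1 < Fintype.card F := Fintype.one_lt_card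
  have hq : 0 < Fintype.card F := by omega
  set q := Fintype.card F with hqdef
  have hvlin : (fun a : Fin k → F => Matrix.vecMul a G) = ⇑(Matrix.vecMulLinear G) :=
    funext fun a => (Matrix.vecMulLinear_apply G a).symm
  have hinj' : Function.Injective (Matrix.vecMulLinear G) := hvlin ▸ hinj
  -- d ≥ 1
  have hd : 1 ≤ d := by
    by_contra h
    push_neg at h
    obtain ⟨a, ha0, haw⟩ := hex
    have h0 : wt (Matrix.vecMul a G) = 0 := by omega
    have h1 : Matrix.vecMul a G = 0 := (wt_eq_zero_iff _).1 h0
    exact ha0 (hinj (by simp [h1, Matrix.zero_vecMul]))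
  set m := Nat.card {j : Fin n // ∃ lam : F, lam ≠ 0 ∧ (fun i => G i j) = lam • g} with hm
  have hmc : cdiv d (q ^ (k-1)) ≤ m := mult_lower hk2 hd G hcol hn g hmax
  have hc1 : 1 ≤ cdiv d (q ^ (k-1)) := one_le_cdiv (pow_pos hq _) hd
  obtain ⟨j₀, hj₀⟩ : ∃ j : Fin n, ∃ lam : F, lam ≠ 0 ∧ (fun i => G i j) = lam • g := by
    have hpos : 0 < Nat.card {j : Fin n // ∃ lam : F, lam ≠ 0 ∧ (fun i => G i j) = lam • g} := by
      omega
    rw [Nat.card_eq_fintype_card] at hpos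
    obtain ⟨⟨j, hj⟩⟩ := Fintype.card_pos_iff.1 hpos
    exact ⟨j, hj⟩
  -- membership in the iInf
  have hmemInf : ∀ c : Fin n → F,
      (c ∈ ⨅ j ∈ {j : Fin n | ∃ lam : F, lam ≠ 0 ∧ (fun i => G i j) = lam • g},
        LinearMap.ker (LinearMap.proj j : (Fin n → F) →ₗ[F] F)) ↔
      ∀ j : Fin n, (∃ lam : F, lam ≠ 0 ∧ (fun i => G i j) = lam • g) → c j = 0 := by
    intro c
    simp [Submodule.mem_iInf, Set.mem_setOf_eq]
  -- vanishing characterization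
  have hvan : ∀ a : Fin k → F, (dotProduct a g = 0 ↔
      ∀ j : Fin n, (∃ lam : F, lam ≠ 0 ∧ (fun i => G i j) = lam • g) →
        Matrix.vecMul a G j = 0) := by
    intro a
    constructor
    · rintro hag j ⟨lam, hlam, hcolj⟩
      rw [vecMul_apply', hcolj, dotProduct_smul, hag, smul_zero]
    · intro hall
      obtain ⟨lam, hlam, hcolj⟩ := hj₀
      have := hall j₀ ⟨lam, hlam, hcolj⟩
      rw [vecMul_apply', hcolj, dotProduct_smul, smul_eq_mul] at this
      exact (mul_eq_zero.1 this).resolve_left hlam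
  -- D as image of the kernel of dotL g
  have hDeq : D = Submodule.map (Matrix.vecMulLinear G) (LinearMap.ker (dotL g)) := by
    rw [hD]
    ext c
    rw [Submodule.mem_inf]
    constructor
    · rintro ⟨⟨a, rfl⟩, hzero⟩
      refine Submodule.mem_map.2 ⟨a, ?_, rfl⟩
      rw [LinearMap.mem_ker]
      show dotProduct a g = 0
      rw [hvan a]
      intro j hj
      rw [← Matrix.vecMulLinear_apply]
      exact (hmemInf _).1 hzero j hj
    · rintro ⟨a, hker, rfl⟩
      refine ⟨⟨a, rfl⟩, (hmemInf _).2 ?_⟩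
      intro j hj
      rw [Matrix.vecMulLinear_apply]
      exact (hvan a).1 hker j hj
  -- rank
  have hrankD : Module.finrank F D = k - 1 := by
    rw [hDeq, ← LinearEquiv.finrank_eq
      (Submodule.equivMapOfInjective _ hinj' (LinearMap.ker (dotL g)))]
    have hsurj : LinearMap.range (dotL g) = ⊤ := by
      rw [LinearMap.range_eq_top]
      intro x
      obtain ⟨i₀, hi₀⟩ := Function.ne_iff.1 hg
      have hgi₀ : g i₀ ≠ 0 := by simpa using hi₀
      refine ⟨Pi.single i₀ ((g i₀)⁻¹ * x), ?_⟩
      show dotProduct _ g = x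
      rw [single_dotProduct, mul_assoc, mul_comm x (g i₀), ← mul_assoc,
        inv_mul_cancel₀ hgi₀, one_mul]
    have h := LinearMap.finrank_range_add_finrank_ker (dotL g)
    rw [hsurj, finrank_top, Module.finrank_self, Module.finrank_pi, Fintype.card_fin] at h
    omega
  -- min distance
  have hminD : ∀ c ∈ D, c ≠ 0 → d ≤ wt c := by
    intro c hc hne
    rw [hDeq] at hc
    obtain ⟨a, _, rfl⟩ := Submodule.mem_map.1 hc
    have ha0 : a ≠ 0 := by
      rintro rfl
      exact hne (map_zero _)
    rw [Matrix.vecMulLinear_apply]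
    exact hmin a ha0
  -- support characterization
  have hsupp : ∀ j : Fin n, (∃ c ∈ D, c j ≠ 0) ↔
      ¬ (∃ lam : F, lam ≠ 0 ∧ (fun i => G i j) = lam • g) := by
    intro j
    constructor
    · rintro ⟨c, hc, hcj⟩ hjS
      rw [hD] at hc
      exact hcj ((hmemInf c).1 hc.2 j hjS)
    · intro hjS
      by_contra hall
      push_neg at hall
      obtain ⟨i₀, hi₀⟩ := Function.ne_iff.1 hg
      have hgi₀ : g i₀ ≠ 0 := by simpa using hi₀
      set a₀ : Fin k → F := Pi.single i₀ (g i₀)⁻¹ with ha₀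
      have ha₀1 : dotProduct a₀ g = 1 := by
        rw [ha₀, single_dotProduct]
        exact inv_mul_cancel₀ hgi₀
      have hkey : ∀ a : Fin k → F, dotProduct a g = 0 →
          dotProduct a (fun i => G i j) = 0 := by
        intro a hag
        have haD : Matrix.vecMul a G ∈ D := by
          rw [hD]
          exact Submodule.mem_inf.2 ⟨LinearMap.mem_range.2 ⟨a, Matrix.vecMulLinear_apply G a⟩,
            (hmemInf _).2 ((hvan a).1 hag)⟩
        have h0 : Matrix.vecMul a G j = 0 := hall _ haD
        rwa [vecMul_apply'] at h0
      set μ := dotProduct a₀ (fun i => G i j) with hμdef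
      have hcolμ : (fun i => G i j) = μ • g := by
        funext i
        have hag : dotProduct (Pi.single i (1:F) - (g i) • a₀) g = 0 := by
          rw [sub_dotProduct, smul_dotProduct, single_dotProduct, ha₀1]
          simp
        have h := hkey _ hag
        rw [sub_dotProduct, smul_dotProduct, single_dotProduct, ← hμdef,
          sub_eq_zero, one_mul, smul_eq_mul] at h
        rw [h]
        simp [mul_comm]
      have hμ0 : μ ≠ 0 := by
        intro h0
        apply hcol j
        rw [hcolμ, h0, zero_smul]
      exact hjS ⟨μ, hμ0, hcolμ⟩
  -- card of support
  have hmfilter : m = (univ.filter (fun j : Fin n =>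
      ∃ lam : F, lam ≠ 0 ∧ (fun i => G i j) = lam • g)).card := by
    rw [hm, natcard_filter]
  obtain ⟨Ns, hNs⟩ : ∃ x : ℕ, Nat.card {j : Fin n // ∃ c ∈ D, c j ≠ 0} = x := ⟨_, rfl⟩
  have hcardsupp : Ns = n - m := by
    rw [← hNs, natcard_filter]
    clear hNs
    have heq : univ.filter (fun j : Fin n => ∃ c ∈ D, c j ≠ 0)
        = univ.filter (fun j : Fin n =>
            ¬ (∃ lam : F, lam ≠ 0 ∧ (fun i => G i j) = lam • g)) :=
      Finset.filter_congr (fun j _ => by rw [hsupp j])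
    rw [heq]
    have hsplit := Finset.card_filter_add_card_filter_not
      (s := (univ : Finset (Fin n)))
      (p := fun j : Fin n => ∃ lam : F, lam ≠ 0 ∧ (fun i => G i j) = lam • g)
    rw [Finset.card_univ, Fintype.card_fin] at hsplit
    omega
  have hmn : m ≤ n := by
    rw [hmfilter]
    calc _ ≤ (univ : Finset (Fin n)).card := Finset.card_filter_le _ _
      _ = n := by rw [Finset.card_univ, Fintype.card_fin]
  -- n = gbound (k-1) + cdiv d q^(k-1)
  have hsplitn : n = gbound q (k-1) d + cdiv d (q ^ (k-1)) := by
    clear hNs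
    have h1 : gbound q ((k-1)+1) d = gbound q (k-1) d + cdiv d (q^(k-1)) := by
      rw [gbound_eq, gbound_eq, Finset.sum_range_succ]
    have h2 : k = (k-1)+1 := by omega
    rw [hn]
    conv_lhs => rw [h2]
    rw [h1]
  have hGr : gbound q (k-1) d ≤ Ns := by
    have h := griesmer_support (k-1) d D hrankD hminD
    rw [hNs] at h
    exact h
  refine ⟨by rw [hNs]; clear hNs; omega, hrankD, hminD, ?_⟩
  -- existence of a minimum-weight word
  have hDne : D ≠ ⊥ := by
    intro h
    rw [h] at hrankD
    simp at hrankD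
    clear hNs
    omega
  obtain ⟨c₁, hc₁D, hc₁⟩ := Submodule.exists_mem_ne_zero_of_ne_bot hDne
  set Wset : Set ℕ := {x | ∃ c ∈ D, c ≠ 0 ∧ wt c = x} with hWdef
  have hWne : Wset.Nonempty := ⟨wt c₁, c₁, hc₁D, hc₁, rfl⟩
  obtain ⟨c₀, hc₀D, hc₀ne, hc₀w⟩ := Nat.sInf_mem hWne
  set w := sInf Wset with hwdef
  have hwmin : ∀ c ∈ D, c ≠ 0 → w ≤ wt c := fun c hc hne => Nat.sInf_le ⟨c, hc, hne, rfl⟩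
  have hdw : d ≤ w := hc₀w ▸ hminD c₀ hc₀D hc₀ne
  have hwle : w ≤ d := by
    by_contra hcon
    push_neg at hcon
    have h := griesmer_support (k-1) w D hrankD hwmin
    rw [hNs] at h
    clear hNs
    rw [← hqdef] at h
    have hstrict := gbound_strict hq (k := k-1) (by omega) hcon
    omega
  exact ⟨c₀, hc₀D, hc₀ne, by clear hNs; omega⟩

end mainthm
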